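/- Let K be a field of characteristic not 2, f ∈ K^×, and let u₁, u₂, u₃ be independent transcendentals over K. Let σ be the K-automorphism of K(u₁,u₂,u₃) of order 2 defined by σ(u₁) = −u₁, σ(u₂) = (3u₁² + 1)/u₂, σ(u₃) = f/u₃. Then K(u₁,u₂,u₃)^⟨σ⟩ = K(r₁, r₂, r₃), where r₁ = (u₃² + f)/u₃, r₂ = u₁u₂/(3u₁² − u₂² + 1), and r₃ = (3u₁² + u₂² + 2u₂ + 1)(u₃² − f)/((3u₁² − u₂² + 1)u₃). In particular this fixed field is rational over K. -/

import Mathlib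

open MvPolynomial IntermediateField

set_option maxHeartbeats 2000000 in
theorem fixed_field_lem522 (K F : Type*) [Field K] [Field F]
    [Algebra K F] [Algebra (MvPolynomial (Fin 3) K) F]
    [IsScalarTower K (MvPolynomial (Fin 3) K) F]
    [IsFractionRing (MvPolynomial (Fin 3) K) F]
    (h2 : (2 : K) ≠ 0) (f : K) (hf : f ≠ 0)
    (u₁ u₂ u₃ : F)
    (hu₁ : u₁ = algebraMap (MvPolynomial (Fin 3) K) F (X 0))
    (hu₂ : u₂ = algebraMap (MvPolynomial (Fin 3) K) F (X 1))
    (hu₃ : u₃ = algebraMap (MvPolynomial (Fin 3) K) F (X 2))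
    (σ : F ≃ₐ[K] F)
    (hσ₁ : σ u₁ = -u₁)
    (hσ₂ : σ u₂ = (3 * u₁ ^ 2 + 1) / u₂)
    (hσ₃ : σ u₃ = algebraMap K F f / u₃) :
    fixedField (Subgroup.zpowers σ) =
      adjoin K {(u₃ ^ 2 + algebraMap K F f) / u₃,
                u₁ * u₂ / (3 * u₁ ^ 2 - u₂ ^ 2 + 1),
                (3 * u₁ ^ 2 + u₂ ^ 2 + 2 * u₂ + 1) * (u₃ ^ 2 - algebraMap K F f) /
                  ((3 * u₁ ^ 2 - u₂ ^ 2 + 1) * u₃)} := by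
  have hinj : Function.Injective (algebraMap (MvPolynomial (Fin 3) K) F) :=
    IsFractionRing.injective _ _
  have hnz : ∀ (p : MvPolynomial (Fin 3) K) (v : Fin 3 → K), eval v p ≠ 0 →
      algebraMap (MvPolynomial (Fin 3) K) F p ≠ 0 := by
    intro p v h hp0
    apply h
    have hp : p = 0 := hinj (by simpa using hp0)
    simp [hp]
  have hu1ne : u₁ ≠ 0 := by rw [hu₁]; exact hnz _ (fun _ => 1) (by simp)
  have hu2ne : u₂ ≠ 0 := by rw [hu₂]; exact hnz _ (fun _ => 1) (by simp)
  have hu3ne : u₃ ≠ 0 := by rw [hu₃]; exact hnz _ (fun _ => 1) (by simp)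
  have hfne : algebraMap K F f ≠ 0 := fun h => hf ((algebraMap K F).injective (by simpa using h))
  have h2ne : (2 : F) ≠ 0 := by
    have : (2 : F) = algebraMap K F 2 := (map_ofNat (algebraMap K F) 2).symm
    rw [this]
    exact fun h => h2 ((algebraMap K F).injective (by simpa using h))
  have hCf : algebraMap (MvPolynomial (Fin 3) K) F (C f) = algebraMap K F f := by
    rw [← MvPolynomial.algebraMap_eq, ← IsScalarTower.algebraMap_apply]
  have hAne : 3 * u₁ ^ 2 + 1 ≠ 0 := by
    have h : (3 * u₁ ^ 2 + 1 : F) = algebraMap (MvPolynomial (Fin 3) K) F (3 * X 0 ^ 2 + 1) := by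
      simp [hu₁, map_ofNat]
    rw [h]; exact hnz _ (fun _ => 0) (by norm_num)
  have hDne : 3 * u₁ ^ 2 - u₂ ^ 2 + 1 ≠ 0 := by
    have h : (3 * u₁ ^ 2 - u₂ ^ 2 + 1 : F)
        = algebraMap (MvPolynomial (Fin 3) K) F (3 * X 0 ^ 2 - X 1 ^ 2 + 1) := by
      simp [hu₁, hu₂, map_ofNat]
    rw [h]; exact hnz _ (fun _ => 0) (by norm_num)
  have hBne : 3 * u₁ ^ 2 + u₂ ^ 2 + 2 * u₂ + 1 ≠ 0 := by
    have h : (3 * u₁ ^ 2 + u₂ ^ 2 + 2 * u₂ + 1 : F)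
        = algebraMap (MvPolynomial (Fin 3) K) F (3 * X 0 ^ 2 + X 1 ^ 2 + 2 * X 1 + 1) := by
      simp [hu₁, hu₂, map_ofNat]
    rw [h]; exact hnz _ (fun _ => 0) (by norm_num)
  have hu21ne : u₂ + 1 ≠ 0 := by
    have h : (u₂ + 1 : F) = algebraMap (MvPolynomial (Fin 3) K) F (X 1 + 1) := by simp [hu₂]
    rw [h]; exact hnz _ (fun _ => 0) (by norm_num)
  have hu3fne : u₃ ^ 2 - algebraMap K F f ≠ 0 := by
    have h : (u₃ ^ 2 - algebraMap K F f : F)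
        = algebraMap (MvPolynomial (Fin 3) K) F (X 2 ^ 2 - C f) := by
      simp [hu₃, hCf]
    rw [h]; exact hnz _ (fun _ => 0) (by simp [hf])
  -- membership characterization of the fixed field
  have hfixmem : ∀ x : F, σ x = x → x ∈ fixedField (Subgroup.zpowers σ) := by
    intro x hx
    have hnat : ∀ n : ℕ, (σ ^ n) x = x := by
      intro n
      induction n with
      | zero => rw [pow_zero]; rfl
      | succ n ih => rw [pow_succ, AlgEquiv.mul_apply, hx, ih]
    intro g
    obtain ⟨g, n, rfl⟩ := g
    show (σ ^ n) • x = x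
    rw [AlgEquiv.smul_def]
    rcases n with n | n
    · rw [Int.ofNat_eq_coe, zpow_natCast]; exact hnat n
    · rw [zpow_negSucc]
      have h1 : (σ ^ (n + 1)) x = x := hnat (n + 1)
      calc (σ ^ (n+1))⁻¹ x = (σ ^ (n+1))⁻¹ ((σ ^ (n+1)) x) := by rw [h1]
        _ = x := by rw [← AlgEquiv.mul_apply, inv_mul_cancel]; rfl
  have hfixmem' : ∀ x : F, x ∈ fixedField (Subgroup.zpowers σ) → σ x = x := by
    intro x hx
    have := hx ⟨σ, Subgroup.mem_zpowers σ⟩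
    exact this
  -- σ fixes the three generators
  have hσf : σ (algebraMap K F f) = algebraMap K F f := σ.commutes f
  have hσr₁ : σ ((u₃ ^ 2 + algebraMap K F f) / u₃) = (u₃ ^ 2 + algebraMap K F f) / u₃ := by
    rw [map_div₀, map_add, map_pow, hσ₃, hσf]
    rw [div_eq_div_iff (div_ne_zero hfne hu3ne) hu3ne]
    field_simp
    ring
  have hden2 : 3*(-u₁)^2 - ((3*u₁^2+1)/u₂)^2 + 1
      = ((3*u₁^2+1) * -(3*u₁^2-u₂^2+1))/u₂^2 := by
    field_simp
    ring
  have hden2ne : ((3*u₁^2+1) * -(3*u₁^2-u₂^2+1))/u₂^2 ≠ 0 :=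
    div_ne_zero (mul_ne_zero hAne (neg_ne_zero.mpr hDne)) (pow_ne_zero 2 hu2ne)
  have hσr₂ : σ (u₁ * u₂ / (3 * u₁ ^ 2 - u₂ ^ 2 + 1))
      = u₁ * u₂ / (3 * u₁ ^ 2 - u₂ ^ 2 + 1) := by
    simp only [map_div₀, map_mul, map_add, map_sub, map_pow, map_one, map_ofNat, hσ₁, hσ₂]
    rw [show ((3:F) * (-u₁) ^ 2 - ((3 * u₁ ^ 2 + 1) / u₂) ^ 2 + 1) =
      ((3*u₁^2+1) * -(3*u₁^2-u₂^2+1))/u₂^2 from hden2]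
    rw [div_eq_div_iff hden2ne hDne]
    field_simp
  have hσr₃ : σ ((3 * u₁ ^ 2 + u₂ ^ 2 + 2 * u₂ + 1) * (u₃ ^ 2 - algebraMap K F f) /
        ((3 * u₁ ^ 2 - u₂ ^ 2 + 1) * u₃))
      = (3 * u₁ ^ 2 + u₂ ^ 2 + 2 * u₂ + 1) * (u₃ ^ 2 - algebraMap K F f) /
        ((3 * u₁ ^ 2 - u₂ ^ 2 + 1) * u₃) := by
    simp only [map_div₀, map_mul, map_add, map_sub, map_pow, map_one, map_ofNat, hσ₁, hσ₂,
      hσ₃, hσf]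
    rw [show ((3:F) * (-u₁) ^ 2 - ((3 * u₁ ^ 2 + 1) / u₂) ^ 2 + 1) =
      ((3*u₁^2+1) * -(3*u₁^2-u₂^2+1))/u₂^2 from hden2]
    rw [div_eq_div_iff (mul_ne_zero hden2ne (div_ne_zero hfne hu3ne)) (mul_ne_zero hDne hu3ne)]
    field_simp
    ring
  set L := adjoin K {(u₃ ^ 2 + algebraMap K F f) / u₃,
                u₁ * u₂ / (3 * u₁ ^ 2 - u₂ ^ 2 + 1),
                (3 * u₁ ^ 2 + u₂ ^ 2 + 2 * u₂ + 1) * (u₃ ^ 2 - algebraMap K F f) /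
                  ((3 * u₁ ^ 2 - u₂ ^ 2 + 1) * u₃)} with hLdef
  have hLM : L ≤ fixedField (Subgroup.zpowers σ) := by
    rw [hLdef]
    apply adjoin_le_iff.mpr
    rintro x hx
    simp only [Set.mem_insert_iff, Set.mem_singleton_iff] at hx
    rcases hx with rfl | rfl | rfl
    exacts [hfixmem _ hσr₁, hfixmem _ hσr₂, hfixmem _ hσr₃]
  have hr1L : (u₃ ^ 2 + algebraMap K F f) / u₃ ∈ L := by
    rw [hLdef]; exact subset_adjoin _ _ (Set.mem_insert _ _)
  have hr2L : u₁ * u₂ / (3 * u₁ ^ 2 - u₂ ^ 2 + 1) ∈ L := by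
    rw [hLdef]; exact subset_adjoin _ _ (Set.mem_insert_of_mem _ (Set.mem_insert _ _))
  have hr3L : (3 * u₁ ^ 2 + u₂ ^ 2 + 2 * u₂ + 1) * (u₃ ^ 2 - algebraMap K F f) /
      ((3 * u₁ ^ 2 - u₂ ^ 2 + 1) * u₃) ∈ L := by
    rw [hLdef]
    exact subset_adjoin _ _ (Set.mem_insert_of_mem _ (Set.mem_insert_of_mem _ rfl))
  have hfL : algebraMap K F f ∈ L := L.algebraMap_mem f
  have hfixL : ∀ y ∈ L, σ y = y := fun y hy => hfixmem' y (hLM hy)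
  have hr1u3 : ((u₃ ^ 2 + algebraMap K F f) / u₃) * u₃ = u₃ ^ 2 + algebraMap K F f :=
    div_mul_cancel₀ _ hu3ne
  have hσu3' : σ u₃ = (u₃ ^ 2 + algebraMap K F f) / u₃ - u₃ := by
    rw [hσ₃]
    field_simp
    ring
  let S : IntermediateField K F :=
    { carrier := {x : F | ∃ p ∈ L, ∃ q ∈ L, x = p + q * u₃}
      zero_mem' := ⟨0, zero_mem L, 0, zero_mem L, by ring⟩
      one_mem' := ⟨1, one_mem L, 0, zero_mem L, by ring⟩
      add_mem' := by
        rintro a b ⟨p, hp, q, hq, rfl⟩ ⟨p', hp', q', hq', rfl⟩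
        exact ⟨p + p', add_mem hp hp', q + q', add_mem hq hq', by ring⟩
      mul_mem' := by
        rintro a b ⟨p, hp, q, hq, rfl⟩ ⟨p', hp', q', hq', rfl⟩
        refine ⟨p * p' - q * q' * algebraMap K F f,
          sub_mem (mul_mem hp hp') (mul_mem (mul_mem hq hq') hfL),
          p * q' + q * p' + q * q' * ((u₃ ^ 2 + algebraMap K F f) / u₃),
          add_mem (add_mem (mul_mem hp hq') (mul_mem hq hp')) (mul_mem (mul_mem hq hq') hr1L),
          ?_⟩
        linear_combination (-(q * q')) * hr1u3
      algebraMap_mem' := fun k => ⟨algebraMap K F k, L.algebraMap_mem k, 0, zero_mem L, by ring⟩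
      inv_mem' := by
        rintro x ⟨p, hp, q, hq, rfl⟩
        by_cases hx0 : p + q * u₃ = 0
        · exact ⟨0, zero_mem L, 0, zero_mem L, by rw [hx0]; simp⟩
        · have hσx : σ (p + q * u₃) =
              (p + q * ((u₃ ^ 2 + algebraMap K F f) / u₃)) + (-q) * u₃ := by
            rw [map_add, map_mul, hfixL p hp, hfixL q hq, hσu3']; ring
          have hconjne : (p + q * ((u₃ ^ 2 + algebraMap K F f) / u₃)) + (-q) * u₃ ≠ 0 := by
            rw [← hσx]
            intro h
            exact hx0 (σ.injective (h.trans (map_zero σ).symm))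
          have hN : (p + q * u₃) * ((p + q * ((u₃ ^ 2 + algebraMap K F f) / u₃)) + (-q) * u₃)
              = p ^ 2 + p * q * ((u₃ ^ 2 + algebraMap K F f) / u₃)
                + q ^ 2 * algebraMap K F f := by
            linear_combination q ^ 2 * hr1u3
          have hNL : p ^ 2 + p * q * ((u₃ ^ 2 + algebraMap K F f) / u₃)
              + q ^ 2 * algebraMap K F f ∈ L :=
            add_mem (add_mem (pow_mem hp 2) (mul_mem (mul_mem hp hq) hr1L))
              (mul_mem (pow_mem hq 2) hfL)
          have hNne : p ^ 2 + p * q * ((u₃ ^ 2 + algebraMap K F f) / u₃)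
              + q ^ 2 * algebraMap K F f ≠ 0 := by
            rw [← hN]; exact mul_ne_zero hx0 hconjne
          refine ⟨(p + q * ((u₃ ^ 2 + algebraMap K F f) / u₃)) /
              (p ^ 2 + p * q * ((u₃ ^ 2 + algebraMap K F f) / u₃) + q ^ 2 * algebraMap K F f),
            div_mem (add_mem hp (mul_mem hq hr1L)) hNL,
            (-q) / (p ^ 2 + p * q * ((u₃ ^ 2 + algebraMap K F f) / u₃)
              + q ^ 2 * algebraMap K F f),
            div_mem (neg_mem hq) hNL, ?_⟩
          rw [show (p + q * ((u₃ ^ 2 + algebraMap K F f) / u₃)) /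
              (p ^ 2 + p * q * ((u₃ ^ 2 + algebraMap K F f) / u₃) + q ^ 2 * algebraMap K F f) +
              -q / (p ^ 2 + p * q * ((u₃ ^ 2 + algebraMap K F f) / u₃)
                + q ^ 2 * algebraMap K F f) * u₃
              = (p + q * ((u₃ ^ 2 + algebraMap K F f) / u₃) + -q * u₃) /
              (p ^ 2 + p * q * ((u₃ ^ 2 + algebraMap K F f) / u₃) + q ^ 2 * algebraMap K F f)
            from by ring]
          rw [eq_div_iff hNne, ← hN, ← mul_assoc, inv_mul_cancel₀ hx0, one_mul] }
  have hu3S : u₃ ∈ S := ⟨0, zero_mem L, 1, one_mem L, by ring⟩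
  have hLS : ∀ y ∈ L, y ∈ S := fun y hy => ⟨y, hy, 0, zero_mem L, by ring⟩
  -- t = B/D lies in S
  have hT : ((3 * u₁ ^ 2 + u₂ ^ 2 + 2 * u₂ + 1) * (u₃ ^ 2 - algebraMap K F f) /
        ((3 * u₁ ^ 2 - u₂ ^ 2 + 1) * u₃)) * u₃ / (u₃ ^ 2 - algebraMap K F f)
      = (3 * u₁ ^ 2 + u₂ ^ 2 + 2 * u₂ + 1) / (3 * u₁ ^ 2 - u₂ ^ 2 + 1) := by
    rw [div_eq_div_iff (by exact hu3fne) hDne]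
    field_simp
  have htS : (3 * u₁ ^ 2 + u₂ ^ 2 + 2 * u₂ + 1) / (3 * u₁ ^ 2 - u₂ ^ 2 + 1) ∈ S := by
    rw [← hT]
    exact div_mem (mul_mem (hLS _ hr3L) hu3S) (sub_mem (pow_mem hu3S 2) (S.algebraMap_mem f))
  have h4ne : (4 : F) ≠ 0 := by
    rw [show (4 : F) = 2 * 2 from by norm_num]
    exact mul_ne_zero h2ne h2ne
  have hDEN : 12 * (u₁ * u₂ / (3 * u₁ ^ 2 - u₂ ^ 2 + 1)) ^ 2
      - ((3 * u₁ ^ 2 + u₂ ^ 2 + 2 * u₂ + 1) / (3 * u₁ ^ 2 - u₂ ^ 2 + 1) - 1) ^ 2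
      - 2 * ((3 * u₁ ^ 2 + u₂ ^ 2 + 2 * u₂ + 1) / (3 * u₁ ^ 2 - u₂ ^ 2 + 1) - 1)
      = -(4 * u₂ * (3 * u₁ ^ 2 + u₂ ^ 2 + 2 * u₂ + 1)) / (3 * u₁ ^ 2 - u₂ ^ 2 + 1) ^ 2 := by
    have hD' : u₁ ^ 2 * 3 - u₂ ^ 2 + 1 ≠ 0 := by intro h; apply hDne; linear_combination h
    have hD'' : 1 - u₂ ^ 2 + u₁ ^ 2 * 3 ≠ 0 := by intro h; apply hDne; linear_combination h
    field_simp
    ring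
  have hDENne : 12 * (u₁ * u₂ / (3 * u₁ ^ 2 - u₂ ^ 2 + 1)) ^ 2
      - ((3 * u₁ ^ 2 + u₂ ^ 2 + 2 * u₂ + 1) / (3 * u₁ ^ 2 - u₂ ^ 2 + 1) - 1) ^ 2
      - 2 * ((3 * u₁ ^ 2 + u₂ ^ 2 + 2 * u₂ + 1) / (3 * u₁ ^ 2 - u₂ ^ 2 + 1) - 1) ≠ 0 := by
    rw [hDEN]
    exact div_ne_zero (neg_ne_zero.mpr (mul_ne_zero (mul_ne_zero h4ne hu2ne) hBne))
      (pow_ne_zero 2 hDne)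
  have hu2eq : u₂ = (-(12 * (u₁ * u₂ / (3 * u₁ ^ 2 - u₂ ^ 2 + 1)) ^ 2)
      - ((3 * u₁ ^ 2 + u₂ ^ 2 + 2 * u₂ + 1) / (3 * u₁ ^ 2 - u₂ ^ 2 + 1) - 1) ^ 2) /
      (12 * (u₁ * u₂ / (3 * u₁ ^ 2 - u₂ ^ 2 + 1)) ^ 2
      - ((3 * u₁ ^ 2 + u₂ ^ 2 + 2 * u₂ + 1) / (3 * u₁ ^ 2 - u₂ ^ 2 + 1) - 1) ^ 2
      - 2 * ((3 * u₁ ^ 2 + u₂ ^ 2 + 2 * u₂ + 1) / (3 * u₁ ^ 2 - u₂ ^ 2 + 1) - 1)) := by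
    rw [eq_div_iff hDENne]
    have hD' : u₁ ^ 2 * 3 - u₂ ^ 2 + 1 ≠ 0 := by intro h; apply hDne; linear_combination h
    have hD'' : 1 - u₂ ^ 2 + u₁ ^ 2 * 3 ≠ 0 := by intro h; apply hDne; linear_combination h
    field_simp
    ring
  have h12S : (12 : F) ∈ S := by
    rw [show (12 : F) = algebraMap K F 12 from (map_ofNat (algebraMap K F) 12).symm]
    exact S.algebraMap_mem 12
  have h2S : (2 : F) ∈ S := by
    rw [show (2 : F) = algebraMap K F 2 from (map_ofNat (algebraMap K F) 2).symm]
    exact S.algebraMap_mem 2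
  have hu2S : u₂ ∈ S := by
    rw [hu2eq]
    exact div_mem
      (sub_mem (neg_mem (mul_mem h12S (pow_mem (hLS _ hr2L) 2)))
        (pow_mem (sub_mem htS (one_mem S)) 2))
      (sub_mem (sub_mem (mul_mem h12S (pow_mem (hLS _ hr2L) 2))
        (pow_mem (sub_mem htS (one_mem S)) 2))
        (mul_mem h2S (sub_mem htS (one_mem S))))
  have hTm1 : (3 * u₁ ^ 2 + u₂ ^ 2 + 2 * u₂ + 1) / (3 * u₁ ^ 2 - u₂ ^ 2 + 1) - 1
      = 2 * u₂ * (u₂ + 1) / (3 * u₁ ^ 2 - u₂ ^ 2 + 1) := by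
    field_simp
    ring
  have hTm1ne : (3 * u₁ ^ 2 + u₂ ^ 2 + 2 * u₂ + 1) / (3 * u₁ ^ 2 - u₂ ^ 2 + 1) - 1 ≠ 0 := by
    rw [hTm1]
    exact div_ne_zero (mul_ne_zero (mul_ne_zero h2ne hu2ne) hu21ne) hDne
  have hu1eq : u₁ = 2 * (u₁ * u₂ / (3 * u₁ ^ 2 - u₂ ^ 2 + 1)) * (u₂ + 1) /
      ((3 * u₁ ^ 2 + u₂ ^ 2 + 2 * u₂ + 1) / (3 * u₁ ^ 2 - u₂ ^ 2 + 1) - 1) := by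
    rw [eq_div_iff hTm1ne]
    have hD' : u₁ ^ 2 * 3 - u₂ ^ 2 + 1 ≠ 0 := by intro h; apply hDne; linear_combination h
    have hD'' : 1 - u₂ ^ 2 + u₁ ^ 2 * 3 ≠ 0 := by intro h; apply hDne; linear_combination h
    field_simp
    ring
  have hu1S : u₁ ∈ S := by
    rw [hu1eq]
    exact div_mem (mul_mem (mul_mem h2S (hLS _ hr2L)) (add_mem hu2S (one_mem S)))
      (sub_mem htS (one_mem S))
  -- every element of F is in S
  have hpoly : ∀ p : MvPolynomial (Fin 3) K, algebraMap (MvPolynomial (Fin 3) K) F p ∈ S := by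
    intro p
    induction p using MvPolynomial.induction_on with
    | C a =>
      rw [← MvPolynomial.algebraMap_eq, ← IsScalarTower.algebraMap_apply]
      exact S.algebraMap_mem a
    | add p q hp hq => rw [map_add]; exact add_mem hp hq
    | mul_X p i hp =>
      rw [map_mul]
      refine mul_mem hp ?_
      fin_cases i
      · exact hu₁ ▸ hu1S
      · exact hu₂ ▸ hu2S
      · exact hu₃ ▸ hu3S
  have hall : ∀ x : F, ∃ p ∈ L, ∃ q ∈ L, x = p + q * u₃ := by
    intro x
    obtain ⟨a, b, hb, hx⟩ := IsFractionRing.div_surjective (A := MvPolynomial (Fin 3) K) x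
    have hxS : x ∈ S := by rw [← hx]; exact div_mem (hpoly a) (hpoly b)
    exact hxS
  -- conclusion
  refine le_antisymm ?_ hLM
  intro x hx
  obtain ⟨p, hp, q, hq, rfl⟩ := hall x
  have hσx := hfixmem' _ hx
  rw [map_add, map_mul, hfixL p hp, hfixL q hq, hσ₃] at hσx
  by_cases hq0 : q = 0
  · simpa [hq0] using hp
  · exfalso
    have h1 : q * (algebraMap K F f / u₃) = q * u₃ := by
      have h := hσx
      exact add_left_cancel h
    have h2' : algebraMap K F f / u₃ = u₃ := mul_left_cancel₀ hq0 h1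
    have h3 : algebraMap K F f = u₃ * u₃ := (div_eq_iff hu3ne).mp h2'
    apply hu3fne
    rw [h3]; ring
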